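/- Let X be a set, let φ : X × X → ℂ, let C ≥ 0, and let I be a nonempty set. Define ψ : (X × I) × (X × I) → ℂ by ψ((x, i), (y, j)) = φ(x, y). Then φ is a Schur multiplier on X of norm at most C if and only if ψ is a Schur multiplier on X × I of norm at most C. (This expresses that the completely bounded norm of a Schur multiplier equals its operator norm: all amplifications of M_φ have the same norm.) -/

import Mathlib

open scoped InnerProductSpace
open scoped ENNReal InnerProduct

noncomputable section

/-- `ℓ²(X)`: square-summable complex-valued functions on `X`. -/
abbrev ellTwo (X : Type*) : Type _ := lp (fun _ : X => ℂ) 2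

/-- The canonical orthonormal basis vector `δ_x` of `ℓ²(X)`. -/
def delta {X : Type*} (x : X) : ellTwo X :=
  letI : DecidableEq X := Classical.decEq X
  lp.single 2 x 1

/-- `φ : X × X → ℂ` is a Schur multiplier of norm at most `C` if there is a bounded
linear map `M` on `B(ℓ²(X))` with `‖M‖ ≤ C` such that
`⟪(M T) δ_y, δ_x⟫ = φ (x, y) * ⟪T δ_y, δ_x⟫` for all `T` and all `x, y`. -/
def IsSchurMultiplier {X : Type*} (φ : X × X → ℂ) (C : ℝ) : Prop :=
  ∃ M : (ellTwo X →L[ℂ] ellTwo X) →L[ℂ] (ellTwo X →L[ℂ] ellTwo X),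
    ‖M‖ ≤ C ∧
    ∀ (T : ellTwo X →L[ℂ] ellTwo X) (x y : X),
      ⟪(M T) (delta y), delta x⟫_ℂ = φ (x, y) * ⟪T (delta y), delta x⟫_ℂ


section SchurAux
section helpers
variable {α : Type*}

lemma rpow_toReal_two (x : ℝ) : x ^ ((2:ℝ≥0∞)).toReal = x ^ (2:ℕ) := by
  rw [show ((2:ℝ≥0∞)).toReal = ((2:ℕ):ℝ) by norm_num, Real.rpow_natCast]

lemma toReal_two_pos : 0 < ((2:ℝ≥0∞)).toReal := by norm_num

lemma memℓp_two_of_sum_sq {g : α → ℂ} {B : ℝ}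
    (h : ∀ s : Finset α, ∑ p ∈ s, ‖g p‖ ^ 2 ≤ B) : Memℓp g 2 := by
  refine memℓp_gen' (C := B) ?_
  intro s
  simpa only [rpow_toReal_two] using h s

lemma sum_sq_le_norm_sq (f : ellTwo α) (s : Finset α) :
    ∑ p ∈ s, ‖f p‖ ^ 2 ≤ ‖f‖ ^ 2 := by
  have h := lp.hasSum_norm toReal_two_pos f
  simp only [rpow_toReal_two] at h
  exact sum_le_hasSum s (fun i _ => sq_nonneg _) h

lemma norm_le_of_sum_sq (f : ellTwo α) {B : ℝ} (hB : 0 ≤ B)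
    (h : ∀ s : Finset α, ∑ p ∈ s, ‖f p‖ ^ 2 ≤ B ^ 2) : ‖f‖ ≤ B := by
  have hs := lp.hasSum_norm (f := f) toReal_two_pos
  simp only [rpow_toReal_two] at hs
  have h2 : ‖f‖ ^ 2 ≤ B ^ 2 := hs.tsum_eq ▸ (Summable.tsum_le_of_sum_le hs.summable h)
  nlinarith [lp.norm_nonneg' f]

-- norm of finitely supported lp element
lemma norm_sq_eq_sum {f : ellTwo α} {s : Finset α} (hf : ∀ p ∉ s, f p = 0) :
    ‖f‖ ^ 2 = ∑ p ∈ s, ‖f p‖ ^ 2 := by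
  have hs := lp.hasSum_norm (f := f) toReal_two_pos
  simp only [rpow_toReal_two] at hs
  refine hs.unique (hasSum_sum_of_ne_finset_zero ?_)
  intro p hp; simp [hf p hp]

lemma delta_apply {X : Type*} [DecidableEq X] (x y : X) :
    (delta x : ellTwo X) y = if y = x then 1 else 0 := by
  rw [show (delta x : ellTwo X) = lp.single 2 x 1 from
    congrArg (fun i => @lp.single X (fun _ => ℂ) _ i 2 x 1) (Subsingleton.elim _ _)]
  by_cases h : y = x
  · subst h; simp [lp.single_apply_self]
  · simp [lp.single_apply_ne 2 x _ h, h]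

lemma norm_delta {X : Type*} (x : X) : ‖(delta x : ellTwo X)‖ = 1 := by
  classical
  rw [show (delta x : ellTwo X) = lp.single 2 x 1 from
    congrArg (fun i => @lp.single X (fun _ => ℂ) _ i 2 x 1) (Subsingleton.elim _ _)]
  simpa using lp.norm_single toReal_two_pos (fun _ : X => (1:ℂ)) x

lemma inner_delta_left {X : Type*} (x : X) (f : ellTwo X) :
    ⟪(delta x : ellTwo X), f⟫_ℂ = f x := by
  classical
  rw [show (delta x : ellTwo X) = lp.single 2 x 1 from
    congrArg (fun i => @lp.single X (fun _ => ℂ) _ i 2 x 1) (Subsingleton.elim _ _)]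
  rw [lp.inner_single_left]
  simp

lemma inner_delta_right {X : Type*} (f : ellTwo X) (x : X) :
    ⟪f, (delta x : ellTwo X)⟫_ℂ = (starRingEnd ℂ) (f x) := by
  rw [← inner_conj_symm, inner_delta_left]

end helpers

lemma delta_eq {X : Type*} [DecidableEq X] (x : X) : (delta x : ellTwo X) = lp.single 2 x 1 :=
  congrArg (fun i => @lp.single X (fun _ => ℂ) _ i 2 x 1) (Subsingleton.elim _ _)
section ops
variable {X I : Type*}

lemma sum_V_le {u : X → ellTwo I} (hu : ∀ x, ‖u x‖ ≤ 1) (f : ellTwo X)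
    (s : Finset (X × I)) :
    ∑ p ∈ s, ‖f p.1 * u p.1 p.2‖ ^ 2 ≤ ‖f‖ ^ 2 := by
  classical
  have hsub : s ⊆ (s.image Prod.fst) ×ˢ (s.image Prod.snd) := by
    intro p hp
    simp only [Finset.mem_product, Finset.mem_image]
    exact ⟨⟨p, hp, rfl⟩, ⟨p, hp, rfl⟩⟩
  calc ∑ p ∈ s, ‖f p.1 * u p.1 p.2‖ ^ 2
      ≤ ∑ p ∈ (s.image Prod.fst) ×ˢ (s.image Prod.snd), ‖f p.1 * u p.1 p.2‖ ^ 2 :=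
        Finset.sum_le_sum_of_subset_of_nonneg hsub (fun _ _ _ => by positivity)
    _ = ∑ x ∈ s.image Prod.fst, ∑ i ∈ s.image Prod.snd, ‖f x‖ ^ 2 * ‖u x i‖ ^ 2 := by
        rw [Finset.sum_product]
        simp [norm_mul, mul_pow]
    _ = ∑ x ∈ s.image Prod.fst, ‖f x‖ ^ 2 * ∑ i ∈ s.image Prod.snd, ‖u x i‖ ^ 2 := by
        simp [Finset.mul_sum]
    _ ≤ ∑ x ∈ s.image Prod.fst, ‖f x‖ ^ 2 * 1 := by
        refine Finset.sum_le_sum fun x _ => ?_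
        refine mul_le_mul_of_nonneg_left ?_ (by positivity)
        refine le_trans (sum_sq_le_norm_sq (u x) _) ?_
        have := hu x
        nlinarith [norm_nonneg (u x)]
    _ ≤ ‖f‖ ^ 2 := by simpa using sum_sq_le_norm_sq f (s.image Prod.fst)

/-- `(Vop u) f (x, i) = f x * u x i`. -/
def Vop (u : X → ellTwo I) (hu : ∀ x, ‖u x‖ ≤ 1) : ellTwo X →L[ℂ] ellTwo (X × I) :=
  LinearMap.mkContinuous
    { toFun := fun f => ⟨fun p : X × I => f p.1 * u p.1 p.2,
        memℓp_two_of_sum_sq (fun s => sum_V_le hu f s)⟩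
      map_add' := fun f g => by
        apply lp.ext
        funext p
        simp only [lp.coeFn_add, Pi.add_apply]
        change (f + g) p.1 * u p.1 p.2 = _
        simp [lp.coeFn_add, add_mul]
      map_smul' := fun c f => by
        apply lp.ext
        funext p
        simp only [lp.coeFn_smul, Pi.smul_apply, RingHom.id_apply]
        change (c • f) p.1 * u p.1 p.2 = c • (f p.1 * u p.1 p.2)
        simp [lp.coeFn_smul, mul_assoc] }
    1 (fun f => by
      simp only [LinearMap.coe_mk, AddHom.coe_mk, one_mul]
      exact norm_le_of_sum_sq _ (norm_nonneg f) (fun s => sum_V_le hu f s))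

@[simp] lemma Vop_apply (u : X → ellTwo I) (hu : ∀ x, ‖u x‖ ≤ 1) (f : ellTwo X) (p : X × I) :
    (Vop u hu f) p = f p.1 * u p.1 p.2 := rfl

lemma norm_Vop_le (u : X → ellTwo I) (hu : ∀ x, ‖u x‖ ≤ 1) : ‖Vop u hu‖ ≤ 1 :=
  LinearMap.mkContinuous_norm_le _ zero_le_one _


/-- restriction of `η ∈ ℓ²(X × I)` to the block over `x`. -/
def restr (η : ellTwo (X × I)) (x : X) : ellTwo I :=
  ⟨fun i => η (x, i), memℓp_two_of_sum_sq (B := ‖η‖ ^ 2) (fun s => by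
    classical
    have : ∑ i ∈ s, ‖η (x, i)‖ ^ 2 = ∑ p ∈ s.image (Prod.mk x), ‖η p‖ ^ 2 := by
      rw [Finset.sum_image (fun a _ b _ h => by simpa using (Prod.mk.injEq x a x b ▸ h).2)]
    rw [this]
    exact sum_sq_le_norm_sq η _)⟩

@[simp] lemma restr_apply (η : ellTwo (X × I)) (x : X) (i : I) :
    restr η x i = η (x, i) := rfl

def nf (η : ellTwo (X × I)) (x : X) : ℝ := ‖restr η x‖

def uf (η : ellTwo (X × I)) (x : X) : ellTwo I := (((nf η x)⁻¹ : ℝ) : ℂ) • restr η x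

lemma norm_uf_le (η : ellTwo (X × I)) (x : X) : ‖uf η x‖ ≤ 1 := by
  rw [uf, norm_smul]
  rcases eq_or_ne (nf η x) 0 with h | h
  · simp [h]
  · have h0 : 0 < nf η x := lt_of_le_of_ne (norm_nonneg _) (Ne.symm h)
    rw [show ‖(((nf η x)⁻¹ : ℝ) : ℂ)‖ = (nf η x)⁻¹ by
      rw [Complex.norm_real, Real.norm_eq_abs, abs_of_nonneg (by positivity)]]
    rw [show ‖restr η x‖ = nf η x from rfl, inv_mul_cancel₀ h]

lemma nf_mul_uf (η : ellTwo (X × I)) (x : X) (i : I) :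
    ((nf η x : ℝ) : ℂ) * uf η x i = η (x, i) := by
  rcases eq_or_ne (nf η x) 0 with h | h
  · have : restr η x = 0 := by rw [← norm_eq_zero]; exact h
    have h2 : η (x, i) = 0 := by
      rw [show η (x, i) = restr η x i from rfl, this]
      simp
    simp [h, h2]
  · have : uf η x i = (((nf η x)⁻¹ : ℝ) : ℂ) * η (x, i) := by
      simp [uf, lp.coeFn_smul, Pi.smul_apply, smul_eq_mul]
    rw [this, ← mul_assoc, ← Complex.ofReal_mul, mul_inv_cancel₀ h]
    simp

lemma nf_nonneg (η : ellTwo (X × I)) (x : X) : 0 ≤ nf η x := norm_nonneg _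

lemma hasSum_nf_sq (η : ellTwo (X × I)) (x : X) :
    HasSum (fun i => ‖η (x, i)‖ ^ 2) ((nf η x) ^ 2) := by
  have h := lp.hasSum_norm toReal_two_pos (restr η x)
  simp only [rpow_toReal_two] at h
  exact h

lemma sum_nf_sq_le (η : ellTwo (X × I)) (s : Finset X) :
    ∑ x ∈ s, (nf η x) ^ 2 ≤ ‖η‖ ^ 2 := by
  classical
  have H : HasSum (fun i : I => ∑ x ∈ s, ‖η (x, i)‖ ^ 2) (∑ x ∈ s, (nf η x) ^ 2) :=
    hasSum_sum (fun x _ => hasSum_nf_sq η x)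
  rw [← H.tsum_eq]
  refine Summable.tsum_le_of_sum_le H.summable (fun t => ?_)
  have : ∑ i ∈ t, ∑ x ∈ s, ‖η (x, i)‖ ^ 2 = ∑ p ∈ s ×ˢ t, ‖η p‖ ^ 2 := by
    rw [Finset.sum_product]
    exact Finset.sum_comm
  rw [this]
  exact sum_sq_le_norm_sq η _

/-- the vector of block norms, in `ℓ²(X)`. -/
def etaX (η : ellTwo (X × I)) : ellTwo X :=
  ⟨fun x => ((nf η x : ℝ) : ℂ), memℓp_two_of_sum_sq (B := ‖η‖ ^ 2) (fun s => by
    calc ∑ x ∈ s, ‖((nf η x : ℝ) : ℂ)‖ ^ 2 = ∑ x ∈ s, (nf η x) ^ 2 := by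
          refine Finset.sum_congr rfl fun x _ => ?_
          rw [Complex.norm_real, Real.norm_eq_abs, sq_abs]
      _ ≤ ‖η‖ ^ 2 := sum_nf_sq_le η s)⟩

@[simp] lemma etaX_apply (η : ellTwo (X × I)) (x : X) :
    etaX η x = ((nf η x : ℝ) : ℂ) := rfl

lemma norm_etaX_le (η : ellTwo (X × I)) : ‖etaX η‖ ≤ ‖η‖ := by
  refine norm_le_of_sum_sq _ (norm_nonneg η) (fun s => ?_)
  calc ∑ x ∈ s, ‖(etaX η) x‖ ^ 2 = ∑ x ∈ s, (nf η x) ^ 2 := by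
        refine Finset.sum_congr rfl fun x _ => ?_
        rw [etaX_apply, Complex.norm_real, Real.norm_eq_abs, sq_abs]
    _ ≤ ‖η‖ ^ 2 := sum_nf_sq_le η s

/-- block projection. -/
def Pblock [DecidableEq X] (y : X) : ellTwo (X × I) →L[ℂ] ellTwo (X × I) :=
  LinearMap.mkContinuous
    { toFun := fun η => ⟨fun p => if p.1 = y then η p else 0,
        memℓp_two_of_sum_sq (B := ‖η‖ ^ 2) (fun s => by
          refine le_trans (Finset.sum_le_sum (fun p _ => ?_)) (sum_sq_le_norm_sq η s)
          split_ifs <;> simp [norm_nonneg])⟩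
      map_add' := fun f g => by
        apply lp.ext; funext p
        change (if p.1 = y then (f + g) p else 0) = _
        simp only [lp.coeFn_add, Pi.add_apply]
        split_ifs <;> simp
      map_smul' := fun c f => by
        apply lp.ext; funext p
        change (if p.1 = y then (c • f) p else 0) = (c • (fun q => if q.1 = y then f q else 0)) p
        simp only [lp.coeFn_smul, Pi.smul_apply, smul_eq_mul]
        split_ifs <;> simp }
    1 (fun η => by
      simp only [LinearMap.coe_mk, AddHom.coe_mk, one_mul]
      refine norm_le_of_sum_sq _ (norm_nonneg η) (fun s => ?_)
      refine le_trans (Finset.sum_le_sum (fun p _ => ?_)) (sum_sq_le_norm_sq η s)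
      change ‖if p.1 = y then η p else 0‖ ^ 2 ≤ _
      split_ifs <;> simp [norm_nonneg])

@[simp] lemma Pblock_apply [DecidableEq X] (y : X) (η : ellTwo (X × I)) (p : X × I) :
    (Pblock y η) p = if p.1 = y then η p else 0 := rfl

lemma Pblock_eq_smul_Vop [DecidableEq X] (η : ellTwo (X × I)) (y : X) :
    Pblock y η = ((nf η y : ℝ) : ℂ) • Vop (uf η) (norm_uf_le η) (delta y) := by
  apply lp.ext; funext p
  rw [show ((((nf η y : ℝ) : ℂ) • Vop (uf η) (norm_uf_le η) (delta y)) : ∀ _, ℂ) p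
      = ((nf η y : ℝ) : ℂ) * (Vop (uf η) (norm_uf_le η) (delta y)) p by
    rfl]
  rw [Vop_apply, Pblock_apply, delta_apply]
  rcases eq_or_ne p.1 y with h | h
  · obtain ⟨px, pi⟩ := p
    simp only at h
    subst h
    rw [if_pos rfl, if_pos rfl, one_mul]
    exact (nf_mul_uf η px pi).symm
  · rw [if_neg h, if_neg h, zero_mul, mul_zero]

lemma Vop_delta_delta [DecidableEq X] [DecidableEq I] (x : X) (i : I)
    (hu : ∀ x' : X, ‖(delta i : ellTwo I)‖ ≤ 1) :
    Vop (fun _ : X => (delta i : ellTwo I)) hu (delta x) = delta (x, i) := by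
  apply lp.ext; funext p
  rw [Vop_apply, delta_apply, delta_apply, delta_apply]
  rcases eq_or_ne p (x, i) with h | h
  · subst h; simp
  · rw [if_neg h]
    rcases (not_and_or.mp (fun hc : p.1 = x ∧ p.2 = i => h (Prod.ext hc.1 hc.2))) with h' | h'
    · rw [if_neg h', zero_mul]
    · rw [if_neg h', mul_zero]

end ops

lemma nf_def {X I : Type*} (η : ellTwo (X × I)) (x : X) : nf η x = ‖restr η x‖ := rfl
section main
variable {X I : Type*} [DecidableEq X] [DecidableEq I] (φ : X × X → ℂ)
variable (M : (ellTwo X →L[ℂ] ellTwo X) →L[ℂ] (ellTwo X →L[ℂ] ellTwo X))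

/-- the amplified multiplier, defined coordinatewise by an absolutely convergent sum. -/
def zeta (T : ellTwo (X × I) →L[ℂ] ellTwo (X × I)) (η : ellTwo (X × I)) (p : X × I) : ℂ :=
  ∑' y : X, (starRingEnd ℂ) (φ (p.1, y)) * (T (Pblock y η)) p

lemma hu_delta (i : I) : ∀ _ : X, ‖(delta i : ellTwo I)‖ ≤ 1 :=
  fun _ => le_of_eq (norm_delta i)

lemma zeta_hasSum
    (hM : ∀ (T : ellTwo X →L[ℂ] ellTwo X) (x y : X),
      ⟪(M T) (delta y), delta x⟫_ℂ = φ (x, y) * ⟪T (delta y), delta x⟫_ℂ)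
    (T : ellTwo (X × I) →L[ℂ] ellTwo (X × I)) (η : ellTwo (X × I)) (x : X) (i : I) :
    HasSum (fun y : X => (starRingEnd ℂ) (φ (x, y)) * (T (Pblock y η)) (x, i))
      ((M (((Vop (fun _ : X => (delta i : ellTwo I)) (hu_delta i))†) ∘L T ∘L
          Vop (uf η) (norm_uf_le η)) (etaX η)) x) := by
  set W := Vop (fun _ : X => (delta i : ellTwo I)) (hu_delta i) with hW
  set V := Vop (uf η) (norm_uf_le η) with hV
  set S := (W†) ∘L T ∘L V with hS
  have hexp : HasSum (fun y : X => lp.single 2 y (etaX η y)) (etaX η) :=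
    lp.hasSum_single (by norm_num) (etaX η)
  have h2 := hexp.mapL ((innerSL ℂ (delta x)).comp (M S))
  rw [show ((innerSL ℂ (delta x)).comp (M S)) (etaX η) = (M S (etaX η)) x by
    simp [inner_delta_left]] at h2
  refine HasSum.congr_fun h2 (fun y => ?_)
  have hsingle : (lp.single 2 y (etaX η y) : ellTwo X) = (etaX η y) • delta y := by
    rw [delta_eq, ← lp.single_smul, smul_eq_mul, mul_one]
  simp only [ContinuousLinearMap.coe_comp', Function.comp_apply, hsingle, map_smul,
    innerSL_apply_apply, inner_smul_right, inner_delta_left]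
  have hMS : ⟪(delta x : ellTwo X), (M S) (delta y)⟫_ℂ
      = (starRingEnd ℂ) (φ (x, y)) * (S (delta y)) x := by
    calc ⟪(delta x : ellTwo X), (M S) (delta y)⟫_ℂ
        = (starRingEnd ℂ) ⟪(M S) (delta y), delta x⟫_ℂ := (inner_conj_symm _ _).symm
      _ = (starRingEnd ℂ) (φ (x, y) * ⟪S (delta y), delta x⟫_ℂ) := by rw [hM S x y]
      _ = (starRingEnd ℂ) (φ (x, y)) * ⟪(delta x : ellTwo X), S (delta y)⟫_ℂ := by
          rw [map_mul, inner_conj_symm]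
      _ = (starRingEnd ℂ) (φ (x, y)) * (S (delta y)) x := by rw [inner_delta_left]
  rw [← inner_delta_left x ((M S) (delta y)), hMS]
  have hSdy : (S (delta y)) x = (T (V (delta y))) (x, i) := by
    rw [hS]
    simp only [ContinuousLinearMap.coe_comp', Function.comp_apply]
    rw [← inner_delta_left x ((W†) (T (V (delta y)))),
      ContinuousLinearMap.adjoint_inner_right, hW, Vop_delta_delta x i (hu_delta i),
      inner_delta_left]
  rw [hSdy]
  have hPb : (T (Pblock y η)) (x, i) = ((nf η y : ℝ) : ℂ) * (T (V (delta y))) (x, i) := by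
    rw [Pblock_eq_smul_Vop, map_smul, ← hV]
    rfl
  rw [hPb, etaX_apply, smul_eq_mul]
  ring

end main
section main2
variable {X I : Type*} [DecidableEq X] [DecidableEq I] (φ : X × X → ℂ)
variable (M : (ellTwo X →L[ℂ] ellTwo X) →L[ℂ] (ellTwo X →L[ℂ] ellTwo X))

lemma M_apply_delta
    (hM : ∀ (T : ellTwo X →L[ℂ] ellTwo X) (x y : X),
      ⟪(M T) (delta y), delta x⟫_ℂ = φ (x, y) * ⟪T (delta y), delta x⟫_ℂ)
    (S : ellTwo X →L[ℂ] ellTwo X) (x y : X) :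
    ((M S) (delta y)) x = (starRingEnd ℂ) (φ (x, y)) * (S (delta y)) x := by
  rw [← inner_delta_left x ((M S) (delta y))]
  calc ⟪(delta x : ellTwo X), (M S) (delta y)⟫_ℂ
      = (starRingEnd ℂ) ⟪(M S) (delta y), delta x⟫_ℂ := (inner_conj_symm _ _).symm
    _ = (starRingEnd ℂ) (φ (x, y) * ⟪S (delta y), delta x⟫_ℂ) := by rw [hM S x y]
    _ = (starRingEnd ℂ) (φ (x, y)) * ⟪(delta x : ellTwo X), S (delta y)⟫_ℂ := by
        rw [map_mul, inner_conj_symm]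
    _ = (starRingEnd ℂ) (φ (x, y)) * (S (delta y)) x := by rw [inner_delta_left]

lemma nf_eq_zero_of_not_mem {ξ : ellTwo (X × I)} {s : Finset (X × I)}
    (hξ : ∀ p ∉ s, ξ p = 0) {x : X} (hx : x ∉ s.image Prod.fst) : nf ξ x = 0 := by
  rw [nf_def, norm_eq_zero]
  apply lp.ext; funext i
  rw [restr_apply]
  have : (x, i) ∉ s := fun hc => hx (Finset.mem_image.2 ⟨(x, i), hc, rfl⟩)
  rw [hξ _ this]
  simp

lemma inner_Pblock_left {ξ : ellTwo (X × I)} {s : Finset (X × I)}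
    (hξ : ∀ p ∉ s, ξ p = 0) (x : X) (z : ellTwo (X × I)) :
    ⟪Pblock x ξ, z⟫_ℂ = ∑ p ∈ s, (if p.1 = x then (starRingEnd ℂ) (ξ p) * z p else 0) := by
  have h0 : ∀ p ∉ s, ⟪(Pblock x ξ) p, z p⟫_ℂ = 0 := by
    intro p hp
    rw [Pblock_apply, hξ p hp]
    simp
  have h := (lp.hasSum_inner (𝕜 := ℂ) (Pblock x ξ) z).unique
    (hasSum_sum_of_ne_finset_zero (s := s) h0)
  rw [h]
  refine Finset.sum_congr rfl fun p _ => ?_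
  rw [Pblock_apply]
  split_ifs with hp
  · simp [RCLike.inner_apply]; ring
  · simp

lemma sum_zeta_pairing
    (hM : ∀ (T : ellTwo X →L[ℂ] ellTwo X) (x y : X),
      ⟪(M T) (delta y), delta x⟫_ℂ = φ (x, y) * ⟪T (delta y), delta x⟫_ℂ)
    (T : ellTwo (X × I) →L[ℂ] ellTwo (X × I)) (η ξ : ellTwo (X × I))
    (s : Finset (X × I)) (hξ : ∀ p ∉ s, ξ p = 0) :
    ∑ p ∈ s, (starRingEnd ℂ) (ξ p) * zeta φ T η p
      = ⟪etaX ξ, M (((Vop (uf ξ) (norm_uf_le ξ))†) ∘L T ∘L Vop (uf η) (norm_uf_le η))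
          (etaX η)⟫_ℂ := by
  classical
  set V := Vop (uf η) (norm_uf_le η) with hVdef
  set Vx := Vop (uf ξ) (norm_uf_le ξ) with hVxdef
  set S := (Vx†) ∘L T ∘L V with hSdef
  set sx := s.image Prod.fst with hsx
  have hz : ∀ p : X × I, HasSum
      (fun y => (starRingEnd ℂ) (φ (p.1, y)) * (T (Pblock y η)) p) (zeta φ T η p) :=
    fun p => ((zeta_hasSum φ M hM T η p.1 p.2).summable).hasSum
  have H1 : HasSum (fun y => ∑ p ∈ s, (starRingEnd ℂ) (ξ p) *
      ((starRingEnd ℂ) (φ (p.1, y)) * (T (Pblock y η)) p))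
      (∑ p ∈ s, (starRingEnd ℂ) (ξ p) * zeta φ T η p) :=
    hasSum_sum (fun p _ => (hz p).mul_left _)
  have hexp : HasSum (fun y : X => lp.single 2 y (etaX η y)) (etaX η) :=
    lp.hasSum_single (by norm_num) (etaX η)
  have H2 := hexp.mapL ((innerSL ℂ (etaX ξ)).comp (M S))
  rw [show ((innerSL ℂ (etaX ξ)).comp (M S)) (etaX η) = ⟪etaX ξ, (M S) (etaX η)⟫_ℂ by simp] at H2
  refine H1.unique (HasSum.congr_fun H2 (fun y => Eq.symm ?_))
  -- termwise identification
  have hinner : ∀ w : ellTwo X, ⟪etaX ξ, w⟫_ℂ = ∑ x ∈ sx, ((nf ξ x : ℝ) : ℂ) * w x := by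
    intro w
    have h0 : ∀ x ∉ sx, ⟪(etaX ξ) x, w x⟫_ℂ = 0 := by
      intro x hx
      rw [etaX_apply, nf_eq_zero_of_not_mem hξ hx]
      simp [RCLike.inner_apply]
    have h := (lp.hasSum_inner (𝕜 := ℂ) (etaX ξ) w).unique
      (hasSum_sum_of_ne_finset_zero (s := sx) h0)
    rw [h]
    refine Finset.sum_congr rfl fun x _ => ?_
    rw [etaX_apply]
    simp [RCLike.inner_apply, Complex.conj_ofReal]; ring
  have hsingle : (lp.single 2 y (etaX η y) : ellTwo X) = (etaX η y) • delta y := by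
    rw [delta_eq, ← lp.single_smul, smul_eq_mul, mul_one]
  calc (((innerSL ℂ (etaX ξ)).comp (M S)) (lp.single 2 y (etaX η y)) : ℂ)
      = (etaX η y) * ⟪etaX ξ, (M S) (delta y)⟫_ℂ := by
        simp only [ContinuousLinearMap.coe_comp', Function.comp_apply, hsingle, map_smul,
          innerSL_apply_apply, inner_smul_right, smul_eq_mul]
    _ = ((nf η y : ℝ) : ℂ) * ∑ x ∈ sx, ((nf ξ x : ℝ) : ℂ) * ((M S) (delta y)) x := by
        rw [hinner, etaX_apply]
    _ = ∑ x ∈ sx, (starRingEnd ℂ) (φ (x, y)) *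
          ⟪Pblock x ξ, T (Pblock y η)⟫_ℂ := by
        rw [Finset.mul_sum]
        refine Finset.sum_congr rfl fun x _ => ?_
        rw [M_apply_delta φ M hM S x y]
        have hSdy : (S (delta y)) x = ⟪Vx (delta x), T (V (delta y))⟫_ℂ := by
          rw [hSdef]
          simp only [ContinuousLinearMap.coe_comp', Function.comp_apply]
          rw [← inner_delta_left x ((Vx†) (T (V (delta y)))),
            ContinuousLinearMap.adjoint_inner_right]
        rw [hSdy, Pblock_eq_smul_Vop ξ x, Pblock_eq_smul_Vop η y, map_smul]
        rw [inner_smul_left, inner_smul_right, Complex.conj_ofReal]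
        rw [← hVdef, ← hVxdef]
        ring
    _ = ∑ x ∈ sx, ∑ p ∈ s, (if p.1 = x then
          (starRingEnd ℂ) (ξ p) * ((starRingEnd ℂ) (φ (p.1, y)) * (T (Pblock y η)) p)
          else 0) := by
        refine Finset.sum_congr rfl fun x _ => ?_
        rw [inner_Pblock_left hξ x (T (Pblock y η)), Finset.mul_sum]
        refine Finset.sum_congr rfl fun p _ => ?_
        split_ifs with hp
        · rw [hp]; ring
        · rw [mul_zero]
    _ = ∑ p ∈ s, (starRingEnd ℂ) (ξ p) *
          ((starRingEnd ℂ) (φ (p.1, y)) * (T (Pblock y η)) p) := by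
        rw [Finset.sum_comm]
        refine Finset.sum_congr rfl fun p hp => ?_
        rw [Finset.sum_ite_eq sx p.1]
        rw [if_pos (Finset.mem_image.2 ⟨p, hp, rfl⟩)]

set_option maxHeartbeats 1000000 in
lemma sum_sq_zeta_le {C : ℝ}
    (hM : ∀ (T : ellTwo X →L[ℂ] ellTwo X) (x y : X),
      ⟪(M T) (delta y), delta x⟫_ℂ = φ (x, y) * ⟪T (delta y), delta x⟫_ℂ)
    (hMn : ‖M‖ ≤ C)
    (T : ellTwo (X × I) →L[ℂ] ellTwo (X × I)) (η : ellTwo (X × I)) (s : Finset (X × I)) :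
    ∑ p ∈ s, ‖zeta φ T η p‖ ^ 2 ≤ (C * ‖T‖ * ‖η‖) ^ 2 := by
  classical
  have hC : 0 ≤ C := le_trans (norm_nonneg M) hMn
  set K := C * ‖T‖ * ‖η‖ with hK
  have hK0 : 0 ≤ K := by positivity
  set a := ∑ p ∈ s, ‖zeta φ T η p‖ ^ 2 with ha
  have ha0 : 0 ≤ a := Finset.sum_nonneg fun p _ => sq_nonneg _
  set g : X × I → ℂ := fun p => if p ∈ s then zeta φ T η p else 0 with hg
  have hgsq : ∀ t : Finset (X × I), ∑ p ∈ t, ‖g p‖ ^ 2 ≤ a := by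
    intro t
    have : ∑ p ∈ t, ‖g p‖ ^ 2 = ∑ p ∈ t, (if p ∈ s then ‖zeta φ T η p‖ ^ 2 else 0) := by
      refine Finset.sum_congr rfl fun p _ => ?_
      by_cases h : p ∈ s <;> simp [hg, h]
    rw [this, Finset.sum_ite_mem]
    exact Finset.sum_le_sum_of_subset_of_nonneg Finset.inter_subset_right
      (fun p _ _ => sq_nonneg _)
  have hmem : Memℓp g 2 := memℓp_two_of_sum_sq hgsq
  set Ξ : ellTwo (X × I) := ⟨g, hmem⟩ with hΞdef
  have hΞcoe : ∀ p, Ξ p = g p := fun p => rfl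
  have hΞ : ∀ p ∉ s, Ξ p = 0 := fun p hp => by rw [hΞcoe, hg]; exact if_neg hp
  have hpair := sum_zeta_pairing φ M hM T η Ξ s hΞ
  have hL : ∑ p ∈ s, (starRingEnd ℂ) (Ξ p) * zeta φ T η p = (a : ℂ) := by
    rw [ha]
    push_cast
    refine Finset.sum_congr rfl fun p hp => ?_
    simp only [hΞcoe, hg, if_pos hp]
    rw [RCLike.conj_mul]
    norm_cast
  have hΞsq : ‖Ξ‖ ^ 2 = a := by
    rw [norm_sq_eq_sum hΞ, ha]
    refine Finset.sum_congr rfl fun p hp => ?_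
    simp only [hΞcoe, hg, if_pos hp]
  -- norm bound on the right side
  set S := ((Vop (uf Ξ) (norm_uf_le Ξ))†) ∘L T ∘L Vop (uf η) (norm_uf_le η) with hSdef
  have hSn : ‖S‖ ≤ ‖T‖ := by
    rw [hSdef]
    refine le_trans (ContinuousLinearMap.opNorm_comp_le _ _) ?_
    have h1 : ‖(Vop (uf Ξ) (norm_uf_le Ξ))†‖ = ‖Vop (uf Ξ) (norm_uf_le Ξ)‖ :=
      LinearIsometryEquiv.norm_map ContinuousLinearMap.adjoint _
    have h2 := ContinuousLinearMap.opNorm_comp_le T (Vop (uf η) (norm_uf_le η))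
    calc ‖(Vop (uf Ξ) (norm_uf_le Ξ))†‖ * ‖T ∘L Vop (uf η) (norm_uf_le η)‖
        ≤ 1 * (‖T‖ * 1) := by
          refine mul_le_mul (h1 ▸ norm_Vop_le _ _) (le_trans h2 ?_) (norm_nonneg _)
            zero_le_one
          exact mul_le_mul_of_nonneg_left (norm_Vop_le _ _) (norm_nonneg T)
      _ = ‖T‖ := by ring
  have hbound : a ≤ ‖Ξ‖ * K := by
    have h2 : ‖(M S) (etaX η)‖ ≤ (C * ‖T‖) * ‖η‖ := by
      refine le_trans (ContinuousLinearMap.le_opNorm _ _) ?_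
      refine mul_le_mul ?_ (norm_etaX_le η) (norm_nonneg _) (by positivity)
      refine le_trans (ContinuousLinearMap.le_opNorm M S) ?_
      exact mul_le_mul hMn hSn (norm_nonneg S) hC
    have hnormA : a = ‖⟪etaX Ξ, (M S) (etaX η)⟫_ℂ‖ := by
      rw [← hpair, hL, Complex.norm_real, Real.norm_eq_abs, abs_of_nonneg ha0]
    calc a = ‖⟪etaX Ξ, (M S) (etaX η)⟫_ℂ‖ := hnormA
      _ ≤ ‖etaX Ξ‖ * ‖(M S) (etaX η)‖ := norm_inner_le_norm _ _
      _ ≤ ‖Ξ‖ * ((C * ‖T‖) * ‖η‖) :=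
          mul_le_mul (norm_etaX_le Ξ) h2 (norm_nonneg _) (norm_nonneg _)
      _ = ‖Ξ‖ * K := by rw [hK]
  nlinarith [norm_nonneg Ξ, sq_nonneg (‖Ξ‖ - K), sq_nonneg (‖Ξ‖ + K)]

end main2

end SchurAux

set_option maxHeartbeats 2000000 in
/-- The operator norm of a Schur multiplier equals its completely bounded norm: `φ` is a
Schur multiplier on `X` of norm at most `C` iff its amplification
`ψ ((x, i), (y, j)) = φ (x, y)` is a Schur multiplier on `X × I` of norm at most `C`,
for any nonempty index set `I`. -/
theorem isSchurMultiplier_amplification_iff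
    {X I : Type*} [Nonempty I] (φ : X × X → ℂ) (C : ℝ) (hC : 0 ≤ C) :
    IsSchurMultiplier φ C ↔
      IsSchurMultiplier (fun p : (X × I) × (X × I) => φ (p.1.1, p.2.1)) C := by
  classical
  constructor
  · -- forward: amplify
    rintro ⟨M, hMn, hM⟩
    have hz : ∀ (T : ellTwo (X × I) →L[ℂ] ellTwo (X × I)) (η : ellTwo (X × I)) (p : X × I),
        HasSum (fun y => (starRingEnd ℂ) (φ (p.1, y)) * (T (Pblock y η)) p) (zeta φ T η p) :=
      fun T η p => ((zeta_hasSum φ M hM T η p.1 p.2).summable).hasSum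
    have hmem : ∀ (T : ellTwo (X × I) →L[ℂ] ellTwo (X × I)) (η : ellTwo (X × I)),
        Memℓp (zeta φ T η) 2 := fun T η =>
      memℓp_two_of_sum_sq (fun s => sum_sq_zeta_le φ M hM hMn T η s)
    set zl : (ellTwo (X × I) →L[ℂ] ellTwo (X × I)) → ellTwo (X × I) → ellTwo (X × I) :=
      fun T η => ⟨zeta φ T η, hmem T η⟩ with hzl
    have hzlc : ∀ T η (p : X × I), (zl T η) p = zeta φ T η p := fun _ _ _ => rfl
    have hnorm : ∀ T η, ‖zl T η‖ ≤ C * ‖T‖ * ‖η‖ := fun T η =>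
      norm_le_of_sum_sq _ (by positivity) (fun s => sum_sq_zeta_le φ M hM hMn T η s)
    have haddη : ∀ T η₁ η₂, zl T (η₁ + η₂) = zl T η₁ + zl T η₂ := by
      intro T η₁ η₂
      apply lp.ext; funext p
      have H : HasSum (fun y => (starRingEnd ℂ) (φ (p.1, y)) * (T (Pblock y (η₁ + η₂))) p)
          (zeta φ T η₁ p + zeta φ T η₂ p) := by
        refine HasSum.congr_fun ((hz T η₁ p).add (hz T η₂ p)) (fun y => ?_)
        rw [map_add, map_add, lp.coeFn_add, Pi.add_apply, mul_add]
      have : (zl T (η₁ + η₂) : ∀ _, ℂ) p = zeta φ T η₁ p + zeta φ T η₂ p := H.tsum_eq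
      rw [this, lp.coeFn_add, Pi.add_apply, hzlc, hzlc]
    have hsmulη : ∀ T (c : ℂ) η, zl T (c • η) = c • zl T η := by
      intro T c η
      apply lp.ext; funext p
      have H : HasSum (fun y => (starRingEnd ℂ) (φ (p.1, y)) * (T (Pblock y (c • η))) p)
          (c * zeta φ T η p) := by
        refine HasSum.congr_fun ((hz T η p).mul_left c) (fun y => ?_)
        rw [map_smul, map_smul, lp.coeFn_smul, Pi.smul_apply, smul_eq_mul]
        ring
      have : (zl T (c • η) : ∀ _, ℂ) p = c * zeta φ T η p := H.tsum_eq
      rw [this, lp.coeFn_smul, Pi.smul_apply, hzlc, smul_eq_mul]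
    set N1 : (ellTwo (X × I) →L[ℂ] ellTwo (X × I)) → (ellTwo (X × I) →L[ℂ] ellTwo (X × I)) :=
      fun T => LinearMap.mkContinuous
        { toFun := zl T, map_add' := haddη T, map_smul' := hsmulη T } (C * ‖T‖)
        (fun η => hnorm T η) with hN1
    have hN1c : ∀ T η, (N1 T) η = zl T η := fun _ _ => rfl
    have hN1n : ∀ T, ‖N1 T‖ ≤ C * ‖T‖ := fun T =>
      LinearMap.mkContinuous_norm_le _ (by positivity) _
    have haddT : ∀ T T', N1 (T + T') = N1 T + N1 T' := by
      intro T T'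
      ext η p
      have H : HasSum (fun y => (starRingEnd ℂ) (φ (p.1, y)) * ((T + T') (Pblock y η)) p)
          (zeta φ T η p + zeta φ T' η p) := by
        refine HasSum.congr_fun ((hz T η p).add (hz T' η p)) (fun y => ?_)
        rw [ContinuousLinearMap.add_apply, lp.coeFn_add, Pi.add_apply, mul_add]
      have h1 : ((N1 (T + T')) η : ∀ _, ℂ) p = zeta φ T η p + zeta φ T' η p := H.tsum_eq
      rw [h1, ContinuousLinearMap.add_apply, lp.coeFn_add, Pi.add_apply]
      rfl
    have hsmulT : ∀ (c : ℂ) T, N1 (c • T) = c • N1 T := by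
      intro c T
      ext η p
      have H : HasSum (fun y => (starRingEnd ℂ) (φ (p.1, y)) * ((c • T) (Pblock y η)) p)
          (c * zeta φ T η p) := by
        refine HasSum.congr_fun ((hz T η p).mul_left c) (fun y => ?_)
        rw [ContinuousLinearMap.smul_apply, lp.coeFn_smul, Pi.smul_apply, smul_eq_mul]
        ring
      have h1 : ((N1 (c • T)) η : ∀ _, ℂ) p = c * zeta φ T η p := H.tsum_eq
      rw [h1, ContinuousLinearMap.smul_apply, lp.coeFn_smul, Pi.smul_apply, smul_eq_mul]
      rfl
    refine ⟨LinearMap.mkContinuous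
      { toFun := N1, map_add' := haddT, map_smul' := hsmulT } C (fun T => hN1n T),
      LinearMap.mkContinuous_norm_le _ hC _, ?_⟩
    intro T p q
    have hPd : ∀ y : X, Pblock y (delta q : ellTwo (X × I)) =
        (if q.1 = y then (delta q : ellTwo (X × I)) else 0) := by
      intro y
      apply lp.ext; funext r
      rw [Pblock_apply]
      by_cases hq : q.1 = y
      · rw [if_pos hq]
        by_cases hr : r.1 = y
        · rw [if_pos hr]
        · rw [if_neg hr, delta_apply, if_neg (fun h : r = q => hr (h ▸ hq))]
      · rw [if_neg hq]
        by_cases hr : r.1 = y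
        · rw [if_pos hr, delta_apply, if_neg (fun h : r = q => hq (h ▸ hr))]
          exact (show ((0 : ellTwo (X × I)) : ∀ _, ℂ) r = 0 from rfl).symm
        · rw [if_neg hr]
          exact (show ((0 : ellTwo (X × I)) : ∀ _, ℂ) r = 0 from rfl).symm
    have hcoord : zeta φ T (delta q) p = (starRingEnd ℂ) (φ (p.1, q.1)) * (T (delta q)) p := by
      have hterm : ∀ y : X, (starRingEnd ℂ) (φ (p.1, y)) * (T (Pblock y (delta q))) p
          = if y = q.1 then (starRingEnd ℂ) (φ (p.1, q.1)) * (T (delta q)) p else 0 := by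
        intro y
        by_cases hy : y = q.1
        · rw [if_pos hy, hy, hPd, if_pos rfl]
        · rw [if_neg hy, hPd, if_neg (fun h => hy h.symm), map_zero]
          rw [show ((0 : ellTwo (X × I)) : ∀ _, ℂ) p = 0 from rfl, mul_zero]
      calc zeta φ T (delta q) p
          = ∑' y, (if y = q.1 then (starRingEnd ℂ) (φ (p.1, q.1)) * (T (delta q)) p else 0) :=
            tsum_congr hterm
        _ = (starRingEnd ℂ) (φ (p.1, q.1)) * (T (delta q)) p := tsum_ite_eq q.1 _
    show ⟪(N1 T) (delta q), delta p⟫_ℂ = φ (p.1, q.1) * ⟪T (delta q), delta p⟫_ℂ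
    rw [inner_delta_right, inner_delta_right, hN1c, hzlc, hcoord, map_mul]
    simp [Complex.conj_conj]
  · -- reverse: compress
    rintro ⟨N, hNn, hN⟩
    obtain ⟨i₀⟩ := ‹Nonempty I›
    set W : ellTwo X →L[ℂ] ellTwo (X × I) :=
      Vop (fun _ : X => (delta i₀ : ellTwo I)) (hu_delta i₀) with hW
    have hWd : ∀ x : X, W (delta x) = delta (x, i₀) :=
      fun x => Vop_delta_delta x i₀ (hu_delta i₀)
    have hWn : ‖W‖ ≤ 1 := norm_Vop_le _ _
    have hWadjn : ‖(W†)‖ ≤ 1 := by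
      rw [LinearIsometryEquiv.norm_map ContinuousLinearMap.adjoint W]
      exact hWn
    have hWadj : ∀ y : X, (W†) (delta (y, i₀)) = delta y := by
      intro y
      refine ext_inner_left ℂ (fun v => ?_)
      rw [ContinuousLinearMap.adjoint_inner_right, inner_delta_right, inner_delta_right]
      rw [show (W v) (y, i₀) = v y * (delta i₀ : ellTwo I) i₀ from rfl,
        delta_apply, if_pos rfl, mul_one]
    have hstep : ∀ (z : ellTwo (X × I)) (x : X),
        ⟪(W†) z, (delta x : ellTwo X)⟫_ℂ = ⟪z, (delta (x, i₀) : ellTwo (X × I))⟫_ℂ := by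
      intro z x
      rw [← inner_conj_symm ((W†) z) (delta x), ContinuousLinearMap.adjoint_inner_right,
        hWd x, inner_conj_symm]
    refine ⟨LinearMap.mkContinuous
      { toFun := fun T => (W†) ∘L (N (W ∘L T ∘L (W†))) ∘L W
        map_add' := fun T T' => by
          simp only [ContinuousLinearMap.add_comp, ContinuousLinearMap.comp_add, map_add]
        map_smul' := fun c T => by
          simp only [ContinuousLinearMap.smul_comp, ContinuousLinearMap.comp_smul, map_smul,
            RingHom.id_apply] }
      C (fun T => ?_), LinearMap.mkContinuous_norm_le _ hC _, ?_⟩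
    · -- norm bound
      simp only [LinearMap.coe_mk, AddHom.coe_mk]
      have hS : ‖W ∘L T ∘L (W†)‖ ≤ ‖T‖ := by
        refine le_trans (ContinuousLinearMap.opNorm_comp_le _ _) ?_
        calc ‖W‖ * ‖T ∘L (W†)‖ ≤ 1 * (‖T‖ * 1) := by
              refine mul_le_mul hWn (le_trans (ContinuousLinearMap.opNorm_comp_le _ _) ?_)
                (norm_nonneg _) zero_le_one
              exact mul_le_mul_of_nonneg_left hWadjn (norm_nonneg T)
          _ = ‖T‖ := by ring
      refine le_trans (ContinuousLinearMap.opNorm_comp_le _ _) ?_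
      calc ‖(W†)‖ * ‖(N (W ∘L T ∘L (W†))) ∘L W‖
          ≤ 1 * ((C * ‖T‖) * 1) := by
            refine mul_le_mul hWadjn ?_ (norm_nonneg _) zero_le_one
            refine le_trans (ContinuousLinearMap.opNorm_comp_le _ _) ?_
            refine mul_le_mul ?_ hWn (norm_nonneg _) (by positivity)
            refine le_trans (ContinuousLinearMap.le_opNorm N _) ?_
            exact mul_le_mul hNn hS (norm_nonneg _) (le_trans (norm_nonneg N) hNn)
        _ = C * ‖T‖ := by ring
    · -- entries
      intro T x y
      show ⟪((W†) ∘L (N (W ∘L T ∘L (W†))) ∘L W) (delta y), delta x⟫_ℂ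
        = φ (x, y) * ⟪T (delta y), delta x⟫_ℂ
      rw [ContinuousLinearMap.comp_apply, ContinuousLinearMap.comp_apply, hWd y, hstep]
      have := hN (W ∘L T ∘L (W†)) (x, i₀) (y, i₀)
      rw [this]
      simp only []
      congr 1
      rw [ContinuousLinearMap.comp_apply, ContinuousLinearMap.comp_apply, hWadj y]
      rw [inner_delta_right, inner_delta_right]
      rw [show (W (T (delta y))) (x, i₀) = (T (delta y)) x * (delta i₀ : ellTwo I) i₀ from rfl,
        delta_apply, if_pos rfl, mul_one]
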